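/- Let g, h be finite-dimensional nilpotent Lie algebras and φ : (Λg*, d) → (Λh*, d) a quasi-isomorphism of Chevalley–Eilenberg DGAs. If the restriction of φ to V_{p-1}(g) is an isomorphism onto V_{p-1}(h), then the restriction of φ to V_p(g) is injective. -/

import Mathlib

open ExteriorAlgebra

set_option maxHeartbeats 1000000

/-- The annihilator filtration `V_0 = {0}`, `V_{p+1} = {α : dα ∈ Λ²V_p}` of the dual of a
Lie algebra; the condition `dα ∈ Λ²V_p` is expressed (equivalently, in finite dimensions)
by requiring `α` to annihilate all brackets `⁅x, y⁆` with `x` in the joint kernel of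
`V_p`. -/
def Vfilt (K L : Type*) [Field K] [LieRing L] [LieAlgebra K L] :
    ℕ → Submodule K (Module.Dual K L)
  | 0 => ⊥
  | p + 1 => Submodule.dualAnnihilator (Submodule.span K
      {z : L | ∃ x y : L, (∀ β ∈ Vfilt K L p, β x = 0) ∧ z = ⁅x, y⁆})

/-- Splitting a double sum over an antisymmetric family. -/
lemma sum_skew_eq_zero {K : Type*} [Field K] {m : ℕ} (c : Fin m → Fin m → K) (a b : Fin m → K)
    (hdiag : ∀ i, c i i = 0) (hskew : ∀ i j, c j i = - c i j)
    (htri : ∑ i : Fin m, ∑ j : Fin m,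
      (if (i:ℕ) < (j:ℕ) then c i j * (b i * a j - a i * b j) else 0) = 0) :
    ∑ i : Fin m, ∑ j : Fin m, c i j * (a i * b j) = 0 := by
  have key : ∀ i j : Fin m, c i j * (a i * b j)
      = (if (i:ℕ) < (j:ℕ) then c i j * (a i * b j) else 0)
        + (if (j:ℕ) < (i:ℕ) then c i j * (a i * b j) else 0) := by
    intro i j
    rcases lt_trichotomy (i:ℕ) (j:ℕ) with hlt | heq | hgt
    · rw [if_pos hlt, if_neg (by omega), add_zero]
    · have : i = j := Fin.ext heq
      subst this; simp [hdiag]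
    · rw [if_neg (by omega), if_pos hgt, zero_add]
  have comm2 : (∑ i : Fin m, ∑ j : Fin m, if (j:ℕ) < (i:ℕ) then c i j * (a i * b j) else 0)
      = ∑ i : Fin m, ∑ j : Fin m, if (i:ℕ) < (j:ℕ) then c j i * (a j * b i) else 0 :=
    Finset.sum_comm
  calc ∑ i : Fin m, ∑ j : Fin m, c i j * (a i * b j)
      = ∑ i : Fin m, ∑ j : Fin m, ((if (i:ℕ) < (j:ℕ) then c i j * (a i * b j) else 0)
        + (if (j:ℕ) < (i:ℕ) then c i j * (a i * b j) else 0)) := by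
        exact Finset.sum_congr rfl fun i _ => Finset.sum_congr rfl fun j _ => key i j
    _ = (∑ i : Fin m, ∑ j : Fin m, if (i:ℕ) < (j:ℕ) then c i j * (a i * b j) else 0)
        + (∑ i : Fin m, ∑ j : Fin m, if (j:ℕ) < (i:ℕ) then c i j * (a i * b j) else 0) := by
        simp [Finset.sum_add_distrib]
    _ = ∑ i : Fin m, ∑ j : Fin m, ((if (i:ℕ) < (j:ℕ) then c i j * (a i * b j) else 0)
        + (if (i:ℕ) < (j:ℕ) then c j i * (a j * b i) else 0)) := by
        rw [comm2]; simp [Finset.sum_add_distrib]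
    _ = ∑ i : Fin m, ∑ j : Fin m,
          -(if (i:ℕ) < (j:ℕ) then c i j * (b i * a j - a i * b j) else 0) := by
        refine Finset.sum_congr rfl fun i _ => Finset.sum_congr rfl fun j _ => ?_
        by_cases hij : (i:ℕ) < (j:ℕ)
        · rw [if_pos hij, if_pos hij, if_pos hij, hskew i j]; ring
        · simp [hij]
    _ = 0 := by
        simp only [Finset.sum_neg_distrib]
        rw [htri]
        simp

/-- Membership criterion for `Vfilt` uniform in `p`. -/
lemma mem_Vfilt_of_forall {K L : Type*} [Field K] [LieRing L] [LieAlgebra K L] (p : ℕ)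
    (β : Module.Dual K L)
    (hβ : ∀ z : L, (∀ γ ∈ Vfilt K L p, γ z = 0) → β z = 0) : β ∈ Vfilt K L p := by
  cases p with
  | zero =>
    show β ∈ (⊥ : Submodule K (Module.Dual K L))
    rw [Submodule.mem_bot]
    apply LinearMap.ext
    intro z
    exact hβ z fun γ hγ => by
      rw [show Vfilt K L 0 = ⊥ from rfl, Submodule.mem_bot] at hγ
      simp [hγ]
  | succ q =>
    refine (Submodule.mem_dualAnnihilator β).mpr fun z hz => ?_
    exact hβ z fun γ hγ => (Submodule.mem_dualAnnihilator γ).mp hγ z hz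

/-- Double contraction of a product of two generators. -/
lemma contract_two_aux {K M : Type*} [Field K] [AddCommGroup M] [Module K M]
    (d1 d2 : Module.Dual K M) (a b : M) :
    algebraMapInv (CliffordAlgebra.contractLeft d1 (CliffordAlgebra.contractLeft d2
      (ι K a * ι K b))) = d2 a * d1 b - d1 a * d2 b := by
  have c2 : CliffordAlgebra.contractLeft d2 (ι K a * ι K b)
      = d2 a • ι K b - d2 b • ι K a := by
    rw [CliffordAlgebra.contractLeft_ι_mul, CliffordAlgebra.contractLeft_ι _ _ b,
      ← Algebra.commutes, ← Algebra.smul_def]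
  rw [c2, map_sub, map_smul, map_smul, CliffordAlgebra.contractLeft_ι _ _ a,
    CliffordAlgebra.contractLeft_ι _ _ b, map_sub, map_smul, map_smul]
  have h1 : algebraMapInv ((algebraMap K (ExteriorAlgebra K M)) (d1 b)) = d1 b :=
    algebraMap_leftInverse M (d1 b)
  have h2 : algebraMapInv ((algebraMap K (ExteriorAlgebra K M)) (d1 a)) = d1 a :=
    algebraMap_leftInverse M (d1 a)
  rw [h1, h2, smul_eq_mul, smul_eq_mul]
  ring

/-- A derivation-like map whose values on generators lie in (degree ≥ 2) has image with no
degree-0 and no degree-1 component. -/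
lemma derivation_no_low_degree {K M : Type*} [Field K] [AddCommGroup M] [Module K M]
    (D : ExteriorAlgebra K M →ₗ[K] ExteriorAlgebra K M) (hD1 : D 1 = 0)
    (hDder : ∀ (a : M) (w : ExteriorAlgebra K M), D (ι K a * w) = D (ι K a) * w - ι K a * D w)
    (hDι : ∀ a : M, D (ι K a) ∈ Submodule.span K
      {w : ExteriorAlgebra K M | ∃ x y : M, w = ι K x * ι K y})
    (δ : Module.Dual K M) (v : ExteriorAlgebra K M) :
    algebraMapInv (D v) = (0:K) ∧
      algebraMapInv (CliffordAlgebra.contractLeft δ (D v)) = (0:K) := by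
  have hAM0 : ∀ x : M, algebraMapInv (ι K x) = (0:K) := fun x => by simp [algebraMapInv]
  have key0 : ∀ s ∈ Submodule.span K {w : ExteriorAlgebra K M | ∃ x y : M, w = ι K x * ι K y},
      ∀ u : ExteriorAlgebra K M, algebraMapInv (s * u) = (0:K) := by
    intro s hs
    induction hs using Submodule.span_induction with
    | mem w hw =>
      obtain ⟨x, y, rfl⟩ := hw
      intro u
      rw [map_mul, map_mul, hAM0, zero_mul, zero_mul]
    | zero => intro u; rw [zero_mul, map_zero]
    | add s t _ _ hs ht => intro u; rw [add_mul, map_add, hs, ht, add_zero]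
    | smul a s _ hs => intro u; rw [smul_mul_assoc, map_smul, hs, smul_zero]
  have key1 : ∀ s ∈ Submodule.span K {w : ExteriorAlgebra K M | ∃ x y : M, w = ι K x * ι K y},
      ∀ u : ExteriorAlgebra K M,
        algebraMapInv (CliffordAlgebra.contractLeft δ (s * u)) = (0:K) := by
    intro s hs
    induction hs using Submodule.span_induction with
    | mem w hw =>
      obtain ⟨x, y, rfl⟩ := hw
      intro u
      rw [mul_assoc, CliffordAlgebra.contractLeft_ι_mul]
      simp [hAM0]
    | zero => intro u; rw [zero_mul, map_zero, map_zero]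
    | add s t _ _ hs ht => intro u; rw [add_mul, map_add, map_add, hs, ht, add_zero]
    | smul a s _ hs => intro u; rw [smul_mul_assoc, map_smul, map_smul, hs, smul_zero]
  have hgen : ∀ l : List M,
      algebraMapInv (D (l.map fun x => ι K x).prod) = (0:K) ∧
        algebraMapInv (CliffordAlgebra.contractLeft δ (D (l.map fun x => ι K x).prod)) = (0:K) := by
    intro l
    induction l with
    | nil => simp [hD1]
    | cons a t ih =>
      rw [List.map_cons, List.prod_cons, hDder]
      constructor
      · rw [map_sub, key0 _ (hDι a), map_mul, hAM0, zero_mul, sub_zero]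
      · rw [map_sub, map_sub, key1 _ (hDι a), zero_sub, CliffordAlgebra.contractLeft_ι_mul,
          map_sub, map_smul, map_mul, hAM0, zero_mul, ih.1, smul_zero, sub_zero, neg_zero]
  have hv : v ∈ Submodule.span K
      (Set.range fun x : Σ k, (Fin k → M) => ιMulti K x.1 x.2) := by
    rw [ExteriorAlgebra.ιMulti_span]; exact Submodule.mem_top
  induction hv using Submodule.span_induction with
  | mem x hx =>
    obtain ⟨⟨k, vv⟩, rfl⟩ := hx
    have hx' : (fun x : Σ k, (Fin k → M) => ιMulti K x.1 x.2) ⟨k, vv⟩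
        = ((List.ofFn vv).map fun x => ι K x).prod := by
      show ιMulti K k vv = _
      rw [ExteriorAlgebra.ιMulti_apply, List.map_ofFn]
      rfl
    rw [hx']
    exact hgen _
  | zero => simp
  | add x y _ _ hx hy =>
    simp only [map_add]
    exact ⟨by rw [hx.1, hy.1, add_zero], by rw [hx.2, hy.2, add_zero]⟩
  | smul a x _ hx =>
    simp only [map_smul]
    exact ⟨by rw [hx.1, smul_zero], by rw [hx.2, smul_zero]⟩
/-- Let `g`, `h` be finite-dimensional nilpotent Lie algebras and
`φ : (Λg*, d) → (Λh*, d)` a quasi-isomorphism of Chevalley–Eilenberg DGAs (with degree-one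
part `f`).  If the restriction of `φ` to `V_p(g)` is an isomorphism onto `V_p(h)`, then the
restriction of `φ` to `V_{p+1}(g)` is injective. -/
theorem quasi_isomorphism_filtration_injective (K g h : Type*) [Field K]
    [LieRing g] [LieAlgebra K g] [FiniteDimensional K g] [LieRing.IsNilpotent g]
    [LieRing h] [LieAlgebra K h] [FiniteDimensional K h] [LieRing.IsNilpotent h]
    (m n : ℕ) (bg : Module.Basis (Fin m) K g) (bh : Module.Basis (Fin n) K h)
    (Dg : ExteriorAlgebra K (Module.Dual K g) →ₗ[K] ExteriorAlgebra K (Module.Dual K g))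
    (Dh : ExteriorAlgebra K (Module.Dual K h) →ₗ[K] ExteriorAlgebra K (Module.Dual K h))
    (hDg1 : Dg 1 = 0) (hDh1 : Dh 1 = 0)
    (hDgder : ∀ (α : Module.Dual K g) (w : ExteriorAlgebra K (Module.Dual K g)),
      Dg (ι K α * w) = Dg (ι K α) * w - ι K α * Dg w)
    (hDhder : ∀ (β : Module.Dual K h) (w : ExteriorAlgebra K (Module.Dual K h)),
      Dh (ι K β * w) = Dh (ι K β) * w - ι K β * Dh w)
    (hDgval : ∀ α : Module.Dual K g, Dg (ι K α) =
      - ∑ i : Fin m, ∑ j : Fin m, if (i : ℕ) < (j : ℕ) then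
          α ⁅bg i, bg j⁆ • (ι K (bg.dualBasis i) * ι K (bg.dualBasis j)) else 0)
    (hDhval : ∀ β : Module.Dual K h, Dh (ι K β) =
      - ∑ i : Fin n, ∑ j : Fin n, if (i : ℕ) < (j : ℕ) then
          β ⁅bh i, bh j⁆ • (ι K (bh.dualBasis i) * ι K (bh.dualBasis j)) else 0)
    (φ : ExteriorAlgebra K (Module.Dual K g) →ₐ[K] ExteriorAlgebra K (Module.Dual K h))
    (f : Module.Dual K g →ₗ[K] Module.Dual K h)
    (hφf : ∀ α : Module.Dual K g, φ (ι K α) = ι K (f α))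
    (hcomm : ∀ w, φ (Dg w) = Dh (φ w))
    -- `φ` is a quasi-isomorphism: it induces a surjection and an injection on cohomology
    (hquasi_surj : ∀ y, Dh y = 0 → ∃ x, Dg x = 0 ∧ ∃ z, y - φ x = Dh z)
    (hquasi_inj : ∀ x, Dg x = 0 → (∃ z, φ x = Dh z) → ∃ w, x = Dg w)
    (p : ℕ)
    (hiso_onto : Submodule.map f (Vfilt K g p) = Vfilt K h p)
    (hiso_inj : ∀ α ∈ Vfilt K g p, f α = 0 → α = 0) :
    ∀ α ∈ Vfilt K g (p + 1), f α = 0 → α = 0 := by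
  intro α hα hfα
  -- Step 1: unpack membership in `Vfilt (p+1)`
  have hα' : ∀ x y : g, (∀ β ∈ Vfilt K g p, β x = 0) → α ⁅x, y⁆ = 0 := by
    intro x y hx
    exact (Submodule.mem_dualAnnihilator α).mp hα _ (Submodule.subset_span ⟨x, y, hx, rfl⟩)
  have hskewα : ∀ x y : g, α ⁅y, x⁆ = - α ⁅x, y⁆ := by
    intro x y
    rw [← lie_skew x y, map_neg, neg_neg]
  have hdiagα : ∀ x : g, α ⁅x, x⁆ = 0 := fun x => by simp
  -- the bilinear form B x z = α ⁅x, z⁆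
  set B : g →ₗ[K] g →ₗ[K] K := LinearMap.mk₂ K (fun x z => α ⁅x, z⁆)
    (fun x x' z => by simp [add_lie])
    (fun c x z => by simp [smul_lie])
    (fun x z z' => by simp [lie_add])
    (fun c x z => by simp [lie_smul]) with hBdef
  have hBapp : ∀ x z : g, B x z = α ⁅x, z⁆ := fun x z => rfl
  -- Step 2: the contractions of dα lie in V_p
  have hTmem : ∀ x : g, B x ∈ Vfilt K g p := by
    intro x
    refine mem_Vfilt_of_forall p (B x) fun z hz => ?_
    rw [hBapp, ← neg_eq_zero, ← hskewα]
    exact hα' z x hz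
  -- Step 3: φ kills dα
  have h0 : φ (Dg (ι K α)) = 0 := by rw [hcomm, hφf, hfα, map_zero, map_zero]
  have hEq : ∑ i : Fin m, ∑ j : Fin m, (if (i:ℕ) < (j:ℕ) then
      α ⁅bg i, bg j⁆ • (ι K (f (bg.dualBasis i)) * ι K (f (bg.dualBasis j))) else 0) = 0 := by
    have h1 := h0
    rw [hDgval, map_neg, neg_eq_zero, map_sum] at h1
    refine Eq.trans ?_ h1
    refine Finset.sum_congr rfl fun i _ => ?_
    rw [map_sum]
    refine Finset.sum_congr rfl fun j _ => ?_
    by_cases hij : (i:ℕ) < (j:ℕ)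
    · rw [if_pos hij, if_pos hij, map_smul, map_mul, hφf, hφf]
    · rw [if_neg hij, if_neg hij, map_zero]
  -- Step 4: the scalar consequence of hEq, by contracting twice
  have hscal : ∀ y₁ y₂ : h, ∑ i : Fin m, ∑ j : Fin m, (if (i:ℕ) < (j:ℕ) then
      α ⁅bg i, bg j⁆ * ((f (bg.dualBasis i)) y₂ * (f (bg.dualBasis j)) y₁
        - (f (bg.dualBasis i)) y₁ * (f (bg.dualBasis j)) y₂) else 0) = 0 := by
    intro y₁ y₂
    set L : ExteriorAlgebra K (Module.Dual K h) →ₗ[K] K :=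
      (algebraMapInv.toLinearMap ∘ₗ CliffordAlgebra.contractLeft (Module.Dual.eval K h y₁))
        ∘ₗ CliffordAlgebra.contractLeft (Module.Dual.eval K h y₂) with hLdef
    have hLapp : ∀ a b : Module.Dual K h, L (ι K a * ι K b) = a y₂ * b y₁ - a y₁ * b y₂ := by
      intro a b
      rw [hLdef]
      simp only [LinearMap.coe_comp, Function.comp_apply, AlgHom.toLinearMap_apply]
      rw [contract_two_aux]
      simp [Module.Dual.eval_apply]
    have h2 := congrArg L hEq
    rw [map_zero, map_sum] at h2
    refine Eq.trans ?_ h2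
    refine Finset.sum_congr rfl fun i _ => ?_
    rw [map_sum]
    refine Finset.sum_congr rfl fun j _ => ?_
    by_cases hij : (i:ℕ) < (j:ℕ)
    · rw [if_pos hij, if_pos hij, map_smul, hLapp, smul_eq_mul]
    · rw [if_neg hij, if_neg hij, map_zero]
  -- Step 5: the full-sum identity
  have hfull : ∀ y₁ y₂ : h, ∑ i : Fin m, ∑ j : Fin m,
      α ⁅bg i, bg j⁆ * ((f (bg.dualBasis i)) y₁ * (f (bg.dualBasis j)) y₂) = 0 := by
    intro y₁ y₂
    exact sum_skew_eq_zero (fun i j => α ⁅bg i, bg j⁆) (fun i => (f (bg.dualBasis i)) y₁)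
      (fun i => (f (bg.dualBasis i)) y₂) (fun i => hdiagα _) (fun i j => hskewα _ _)
      (hscal y₁ y₂)
  -- expansion of f through the basis
  have hcd : ∀ i : Fin m, bg.dualBasis i = bg.coord i := fun i =>
    congrFun (Module.Basis.coe_dualBasis bg) i
  have hβexp : ∀ β : Module.Dual K g, f β = ∑ i : Fin m, β (bg i) • f (bg.dualBasis i) := by
    intro β
    calc f β = f (∑ i : Fin m, β (bg i) • bg.coord i) := by
          rw [Module.Basis.sum_dual_apply_smul_coord]
      _ = ∑ i : Fin m, β (bg i) • f (bg.dualBasis i) := by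
          rw [map_sum]
          exact Finset.sum_congr rfl fun i _ => by rw [map_smul, hcd i]
  -- the transpose map G
  set G : h →ₗ[K] g := ∑ i : Fin m, (f (bg.dualBasis i)).smulRight (bg i) with hGdef
  have hGapp : ∀ y : h, G y = ∑ i : Fin m, (f (bg.dualBasis i)) y • bg i := by
    intro y
    rw [hGdef]
    simp [LinearMap.sum_apply]
  have hGd : ∀ (β : Module.Dual K g) (y : h), β (G y) = f β y := by
    intro β y
    rw [hGapp, map_sum, hβexp β]
    simp only [LinearMap.sum_apply, LinearMap.smul_apply, map_smul, smul_eq_mul]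
    exact Finset.sum_congr rfl fun i _ => mul_comm _ _
  -- Step 6: B (G y) = 0
  have hTG : ∀ y : h, B (G y) = 0 := by
    intro y
    refine hiso_inj _ (hTmem _) ?_
    apply LinearMap.ext
    intro y₂
    rw [LinearMap.zero_apply, hβexp (B (G y))]
    simp only [LinearMap.sum_apply, LinearMap.smul_apply, smul_eq_mul]
    have hBG : ∀ j, B (G y) (bg j)
        = ∑ i : Fin m, (f (bg.dualBasis i)) y * α ⁅bg i, bg j⁆ := by
      intro j
      rw [hGapp, map_sum]
      simp only [LinearMap.sum_apply]
      refine Finset.sum_congr rfl fun i _ => ?_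
      rw [map_smul]
      simp only [LinearMap.smul_apply, smul_eq_mul]
      rfl
    calc ∑ j : Fin m, B (G y) (bg j) * (f (bg.dualBasis j)) y₂
        = ∑ j : Fin m, ∑ i : Fin m,
            (f (bg.dualBasis i)) y * α ⁅bg i, bg j⁆ * (f (bg.dualBasis j)) y₂ := by
          refine Finset.sum_congr rfl fun j _ => ?_
          rw [hBG, Finset.sum_mul]
      _ = ∑ i : Fin m, ∑ j : Fin m,
            α ⁅bg i, bg j⁆ * ((f (bg.dualBasis i)) y * (f (bg.dualBasis j)) y₂) := by
          rw [Finset.sum_comm]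
          exact Finset.sum_congr rfl fun i _ => Finset.sum_congr rfl fun j _ => by ring
      _ = 0 := hfull y y₂
  -- Step 7: the joint kernel of V_p together with range G fills g
  have htop : (Vfilt K g p).dualCoannihilator ⊔ LinearMap.range G = ⊤ := by
    rw [← Subspace.dualAnnihilator_inj, Submodule.dualAnnihilator_top,
      Submodule.dualAnnihilator_sup_eq, Subspace.dualCoannihilator_dualAnnihilator_eq,
      eq_bot_iff]
    rintro β ⟨hβ1, hβ2⟩
    rw [Submodule.mem_bot]
    refine hiso_inj β hβ1 ?_
    apply LinearMap.ext
    intro y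
    rw [LinearMap.zero_apply, ← hGd β y]
    exact (Submodule.mem_dualAnnihilator β).mp hβ2 _ ⟨y, rfl⟩
  -- Step 8: α kills all brackets
  have hall : ∀ x z : g, α ⁅x, z⁆ = 0 := by
    intro x z
    have hx : x ∈ (Vfilt K g p).dualCoannihilator ⊔ LinearMap.range G :=
      htop ▸ Submodule.mem_top
    obtain ⟨w, hw, u, hu, rfl⟩ := Submodule.mem_sup.mp hx
    obtain ⟨y, rfl⟩ := hu
    rw [add_lie, map_add, hα' w z ((Submodule.mem_dualCoannihilator w).mp hw)]
    have hGz : α ⁅G y, z⁆ = 0 := by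
      have hh := hTG y
      calc α ⁅G y, z⁆ = B (G y) z := rfl
        _ = 0 := by rw [hh]; rfl
    rw [hGz, add_zero]
  -- Step 9: α is closed and φ-exact, hence exact
  have hclosed : Dg (ι K α) = 0 := by
    rw [hDgval]
    simp [hall]
  obtain ⟨w, hw⟩ := hquasi_inj (ι K α) hclosed ⟨0, by rw [hφf, hfα, map_zero, map_zero]⟩
  -- Step 10: conclude α = 0 via the degree argument
  have hDι : ∀ a : Module.Dual K g, Dg (ι K a) ∈ Submodule.span K
      {w : ExteriorAlgebra K (Module.Dual K g) |
        ∃ x y : Module.Dual K g, w = ι K x * ι K y} := by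
    intro a
    rw [hDgval]
    refine Submodule.neg_mem _ (Submodule.sum_mem _ fun i _ => Submodule.sum_mem _ fun j _ => ?_)
    by_cases hij : (i:ℕ) < (j:ℕ)
    · rw [if_pos hij]
      exact Submodule.smul_mem _ _ (Submodule.subset_span ⟨_, _, rfl⟩)
    · rw [if_neg hij]
      exact Submodule.zero_mem _
  apply LinearMap.ext
  intro z
  rw [LinearMap.zero_apply]
  calc α z = algebraMapInv (CliffordAlgebra.contractLeft (Module.Dual.eval K g z) (ι K α)) := by
        rw [CliffordAlgebra.contractLeft_ι _ _ α, Module.Dual.eval_apply]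
        exact (algebraMap_leftInverse _ _).symm
    _ = 0 := by
        rw [hw]
        exact (derivation_no_low_degree Dg hDg1 hDgder hDι (Module.Dual.eval K g z) w).2
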